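/- Let n be an even positive integer and suppose g₁₁, g₁₂ are integers with (g₁₁, g₁₂) ≠ (0,0), r, s are integers with 1 ≤ r, s ≤ n, d₁,…,dₙ ∈ {0,1} with d₁ = 1, and c₁,…,cₙ ∈ {0,2} with c₁ = 2. Then the polynomial identity (g₁₁y₁ + g₁₂y₂)^(n+1) = g₁₁^(n+1)·y₁·∏ᵢ(y₁ + dᵢy₂) + g₁₂^(n+1)·y₂·∏ⱼ(cⱼy₁ + y₂) in ℤ[y₁,y₂] is impossible. (More generally it is impossible for any n > 1 under the constraint g₁₁g₂₂ − g₁₂g₂₁ = ±1 for some completion to a unimodular matrix, but the stated special case already follows from evaluating at (1,1) and (1,−1).) -/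

import Mathlib

open MvPolynomial

theorem stmt1 (n : ℕ) (hn : 0 < n) (hne : Even n)
    (g11 g12 : ℤ) (hg : ¬(g11 = 0 ∧ g12 = 0))
    (r s : ℕ) (hr1 : 1 ≤ r) (hrn : r ≤ n) (hs1 : 1 ≤ s) (hsn : s ≤ n)
    (d c : Fin n → ℤ)
    (hd : ∀ i, d i = 0 ∨ d i = 1) (hd1 : d ⟨0, hn⟩ = 1)
    (hc : ∀ j, c j = 0 ∨ c j = 2) (hc1 : c ⟨0, hn⟩ = 2) :
    ¬((C g11 * X 0 + C g12 * X 1 : MvPolynomial (Fin 2) ℤ) ^ (n + 1) =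
        C (g11 ^ (n + 1)) * X 0 * ∏ i, (X 0 + C (d i) * X 1) +
        C (g12 ^ (n + 1)) * X 1 * ∏ j, (C (c j) * X 0 + X 1)) := by
  intro h
  set P : ℤ := ∏ i, (1 + d i) with hP
  set Q : ℤ := ∏ j, (c j + 1) with hQ
  set ε : ℤ := ∏ j, (c j - 1) with hε
  -- evaluate at (1,1)
  have E1 : (g11 + g12) ^ (n + 1) = g11 ^ (n + 1) * P + g12 ^ (n + 1) * Q := by
    have := congrArg (eval ![1, (1:ℤ)]) h
    simpa [eval_prod, Matrix.cons_val_zero, Matrix.cons_val_one, Matrix.head_cons,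
      mul_comm, mul_assoc] using this
  -- evaluate at (1,-1)
  have E2 : (g11 - g12) ^ (n + 1) = - (g12 ^ (n + 1) * ε) := by
    have := congrArg (eval ![1, (-1:ℤ)]) h
    have hzero : (∏ i, (1 + d i * (-1)) : ℤ) = 0 :=
      Finset.prod_eq_zero (Finset.mem_univ ⟨0, hn⟩) (by rw [hd1]; ring)
    simp only [map_add, map_mul, map_pow, eval_C, eval_X, eval_prod,
      Matrix.cons_val_zero, Matrix.cons_val_one, Matrix.head_cons] at this
    rw [show (∏ i, (1 + d i * (-1)) : ℤ) = 0 from hzero] at this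
    simp only [mul_one, mul_zero, zero_add] at this
    rw [show (∏ x, (c x + -1) : ℤ) = ∏ j, (c j - 1) by
      exact Finset.prod_congr rfl fun j _ => by ring] at this
    rw [hε]
    linear_combination this
  have hodd : Odd (n + 1) := Even.add_one hne
  -- basic facts about P, Q, ε
  have hPpos : 0 < P := by
    rw [hP]
    exact Finset.prod_pos fun i _ => by rcases hd i with h | h <;> rw [h] <;> norm_num
  have hQpos : 0 < Q := by
    rw [hQ]
    exact Finset.prod_pos fun j _ => by rcases hc j with h | h <;> rw [h] <;> norm_num
  have hP2 : (2 : ℤ) ∣ P := by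
    have := Finset.dvd_prod_of_mem (fun i => 1 + d i) (Finset.mem_univ (⟨0, hn⟩ : Fin n))
    norm_num [hd1] at this
    exact this
  have hQ3 : (3 : ℤ) ∣ Q := by
    have := Finset.dvd_prod_of_mem (fun j => c j + 1) (Finset.mem_univ (⟨0, hn⟩ : Fin n))
    norm_num [hc1] at this
    exact this
  have hPge : 2 ≤ P := Int.le_of_dvd hPpos hP2
  have hQge : 3 ≤ Q := Int.le_of_dvd hQpos hQ3
  have hprime3 : Prime (3 : ℤ) := Int.prime_three
  have hP3 : ¬ (3 : ℤ) ∣ P := by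
    rw [hP]
    intro hdvd
    obtain ⟨i, -, hi⟩ := (hprime3.dvd_finset_prod_iff _).mp hdvd
    rcases hd i with h | h <;> rw [h] at hi <;> norm_num at hi
  have hεu : ε = 1 ∨ ε = -1 := by
    have hmul : ε * ε = 1 := by
      rw [hε, ← Finset.prod_mul_distrib]
      exact Finset.prod_eq_one fun j _ => by rcases hc j with h | h <;> rw [h] <;> norm_num
    exact Int.isUnit_iff.mp (IsUnit.of_mul_eq_one ε hmul)
  have hinj : Function.Injective fun a : ℤ => a ^ (n + 1) :=
    (Odd.strictMono_pow hodd).injective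
  have hpow : (-ε * g12) ^ (n + 1) = - (g12 ^ (n + 1) * ε) := by
    rcases hεu with h | h <;> rw [h] <;>
      simp [hodd.neg_pow] <;> ring
  have key : g11 - g12 = -ε * g12 :=
    hinj (show (g11 - g12) ^ (n + 1) = (-ε * g12) ^ (n + 1) by rw [E2, hpow])
  rcases hεu with h | h
  · -- ε = 1 : g11 = 0
    rw [h] at key
    have h11 : g11 = 0 := by linarith
    rw [h11] at E1
    have hz : (0 : ℤ) ^ (n + 1) = 0 := zero_pow (Nat.succ_ne_zero n)
    rw [hz] at E1
    simp only [zero_add, zero_mul] at E1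
    have : g12 ^ (n + 1) * (Q - 1) = 0 := by linear_combination -E1
    have hQ1 : Q - 1 ≠ 0 := by linarith
    have : g12 ^ (n + 1) = 0 := by
      rcases mul_eq_zero.mp this with h' | h'
      · exact h'
      · exact absurd h' hQ1
    have h12 : g12 = 0 := pow_eq_zero_iff (Nat.succ_ne_zero n) |>.mp this
    exact hg ⟨h11, h12⟩
  · -- ε = -1 : g11 = 2 * g12
    rw [h] at key
    have h11 : g11 = 2 * g12 := by linarith
    have h12 : g12 ≠ 0 := by
      intro h12
      exact hg ⟨by rw [h11, h12, mul_zero], h12⟩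
    rw [h11] at E1
    have hfac : g12 ^ (n + 1) * (3 ^ (n + 1) - 2 ^ (n + 1) * P - Q) = 0 := by
      have e1 : (2 * g12 + g12) = 3 * g12 := by ring
      rw [e1, mul_pow, mul_pow] at E1
      linear_combination E1
    have hpowne : g12 ^ (n + 1) ≠ 0 := pow_ne_zero _ h12
    have heq : (3 : ℤ) ^ (n + 1) = 2 ^ (n + 1) * P + Q := by
      rcases mul_eq_zero.mp hfac with h' | h'
      · exact absurd h' hpowne
      · linarith
    have hdvd : (3 : ℤ) ∣ 2 ^ (n + 1) * P := by
      have : (2 : ℤ) ^ (n + 1) * P = 3 ^ (n + 1) - Q := by linarith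
      rw [this]
      exact dvd_sub (dvd_pow_self 3 (Nat.succ_ne_zero n)) hQ3
    rcases hprime3.dvd_mul.mp hdvd with h' | h'
    · have := hprime3.dvd_of_dvd_pow h'
      norm_num at this
    · exact hP3 h'
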